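/- Let L be a Lie algebra in the class T with root system R, R^0 its set of isotropic roots and R^× its non-isotropic roots. Then (R, R^0) = {0}, i.e., (α, δ) = 0 for all α ∈ R and δ ∈ R^0. -/

import Mathlib

open scoped Classical

namespace Gen

variable (F L : Type*) [Field F] [CharZero F] [LieRing L] [LieAlgebra F L]

/-- The weight space of a linear functional `α` on a subalgebra `H`. -/
def wt (H : LieSubalgebra F L) (α : Module.Dual F H) : Submodule F L where
  carrier := {x : L | ∀ h : H, ⁅(h : L), x⁆ = α h • x}
  add_mem' := by
    intro a b ha hb h
    rw [lie_add, ha h, hb h, smul_add]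
  zero_mem' := by intro h; simp
  smul_mem' := by
    intro c x hx h
    rw [lie_smul, hx h, smul_comm]

/-- Data for axioms (T1) and (T2): a non-degenerate symmetric invariant bilinear form,
a finite dimensional split toral subalgebra `H` on which the form is non-degenerate,
together with the representatives `t_α ∈ H` of linear functionals on `H`. -/
structure TData where
  B : L →ₗ[F] L →ₗ[F] F
  bsymm : ∀ x y, B x y = B y x
  binv : ∀ x y z, B ⁅x, y⁆ z = B x ⁅y, z⁆
  bnondeg : ∀ x, (∀ y, B x y = 0) → x = 0
  H : LieSubalgebra F L
  hne : H ≠ ⊥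
  hfin : FiniteDimensional F H
  hnondeg : ∀ h : H, (∀ h' : H, B h h' = 0) → h = 0
  decomp : DirectSum.IsInternal (wt F L H)
  t : Module.Dual F H → H
  tspec : ∀ (α : Module.Dual F H) (h : H), B (t α) h = α h

variable {F L}

namespace TData

variable (T : TData F L)

/-- The form transferred to the dual of `H`: `(α, β) = (t_α, t_β)`. -/
def pr (α β : Module.Dual F T.H) : F := T.B (T.t α) (T.t β)

/-- The root system `R = {α : L_α ≠ 0}`. -/
def R : Set (Module.Dual F T.H) := {α | wt F L T.H α ≠ ⊥}

/-- Non-isotropic roots. -/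
def Rx : Set (Module.Dual F T.H) := {α | α ∈ T.R ∧ T.pr α α ≠ 0}

/-- Isotropic roots. -/
def R0 : Set (Module.Dual F T.H) := {α | α ∈ T.R ∧ T.pr α α = 0}

/-- The core: the subalgebra generated by the non-isotropic root spaces. -/
def core : LieSubalgebra F L :=
  LieSubalgebra.lieSpan F L (⋃ α ∈ T.Rx, (wt F L T.H α : Set L))

end TData

variable (F L)

/-- A Lie algebra in the class 𝒯: axioms (T1)–(T6). -/
structure TAlg extends TData F L where
  t3a : ∀ δ ∈ toTData.R0, ∃ x ∈ wt F L toTData.H δ, ∃ y ∈ wt F L toTData.H (-δ),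
          ⁅x, y⁆ = (toTData.t δ : L)
  t3b : ∀ α ∈ toTData.Rx, ∀ x ∈ wt F L toTData.H α, x ≠ 0 →
          ∃ y ∈ wt F L toTData.H (-α), ⁅x, y⁆ = (toTData.t α : L)
  t4 : ∀ α ∈ toTData.Rx, ∀ x ∈ wt F L toTData.H α, ∀ y : L,
          ∃ n : ℕ, ((LieAlgebra.ad F L x) ^ n) y = 0
  t5a : ∀ S1 S2 : Set (Module.Dual F toTData.H), S1.Nonempty → S2.Nonempty →
          S1 ∪ S2 = toTData.Rx → Disjoint S1 S2 →
          ∃ a ∈ S1, ∃ b ∈ S2, toTData.pr a b ≠ 0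
  t5b : ∀ δ ∈ toTData.R0, ∃ α ∈ toTData.Rx, α + δ ∈ toTData.R
  t6free : Module.Free ℤ (AddSubgroup.closure toTData.R0)
  t6fin : Module.Finite ℤ (AddSubgroup.closure toTData.R0)

end Gen
namespace Gen

variable {F L : Type*} [Field F] [CharZero F] [LieRing L] [LieAlgebra F L]

lemma mem_wt {H : LieSubalgebra F L} {α : Module.Dual F H} {x : L} :
    x ∈ wt F L H α ↔ ∀ h : H, ⁅(h : L), x⁆ = α h • x := Iff.rfl

namespace TData

variable (T : TData F L)

lemma wt_lie {μ ν : Module.Dual F T.H} {u v : L}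
    (hu : u ∈ wt F L T.H μ) (hv : v ∈ wt F L T.H ν) :
    ⁅u, v⁆ ∈ wt F L T.H (μ + ν) := by
  rw [mem_wt]
  intro h
  rw [leibniz_lie, mem_wt.mp hu h, mem_wt.mp hv h, smul_lie, lie_smul,
    LinearMap.add_apply, add_smul]

lemma pr_eq (μ ν : Module.Dual F T.H) : T.pr μ ν = μ (T.t ν) := T.tspec μ (T.t ν)

lemma pr_symm (μ ν : Module.Dual F T.H) : T.pr μ ν = T.pr ν μ := T.bsymm _ _

lemma pr_add_left (μ ν ρ : Module.Dual F T.H) :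
    T.pr (μ + ν) ρ = T.pr μ ρ + T.pr ν ρ := by simp [pr_eq]

lemma pr_neg_left (μ ρ : Module.Dual F T.H) : T.pr (-μ) ρ = -T.pr μ ρ := by simp [pr_eq]

lemma pr_smul_left (cc : F) (μ ρ : Module.Dual F T.H) :
    T.pr (cc • μ) ρ = cc * T.pr μ ρ := by simp [pr_eq]

lemma pr_add_right (μ ν ρ : Module.Dual F T.H) :
    T.pr ρ (μ + ν) = T.pr ρ μ + T.pr ρ ν := by
  rw [pr_symm, pr_add_left, pr_symm T μ, pr_symm T ν]

lemma pr_neg_right (μ ρ : Module.Dual F T.H) : T.pr ρ (-μ) = -T.pr ρ μ := by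
  rw [pr_symm, pr_neg_left, pr_symm]

lemma pr_smul_right (cc : F) (μ ρ : Module.Dual F T.H) :
    T.pr ρ (cc • μ) = cc * T.pr ρ μ := by
  rw [pr_symm, pr_smul_left, pr_symm]

lemma wt_ad_pow {β ρ : Module.Dual F T.H} {e z : L}
    (he : e ∈ wt F L T.H β) (hz : z ∈ wt F L T.H ρ) (j : ℕ) :
    ((LieAlgebra.ad F L e) ^ j) z ∈ wt F L T.H (ρ + (j : F) • β) := by
  induction j with
  | zero => simpa using hz
  | succ j ih =>
    have h2 := T.wt_lie he ih
    have heq : β + (ρ + (j : F) • β) = ρ + (((j + 1 : ℕ)) : F) • β := by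
      push_cast
      module
    rw [pow_succ', Module.End.mul_apply]
    rw [← heq]
    exact h2

end TData

end Gen
set_option linter.unusedSectionVars false

namespace Gen

open LieModule

variable {F L : Type*} [Field F] [CharZero F] [LieRing L] [LieAlgebra F L]

/-- If the `f`-string from a primitive vector terminates, the weight is a natural number. -/
lemma exists_nat_of_pow_eq_zero {h e f : L} {t : IsSl2Triple h e f} {m : L} {μ : F}
    (P : t.HasPrimitiveVectorWith m μ)
    (hz : ∃ n : ℕ, ((toEnd F L L f) ^ n) m = 0) : ∃ n : ℕ, μ = n := by
  obtain ⟨n, hn₁, hn₂⟩ := Nat.exists_not_and_succ_of_not_zero_of_exists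
    (p := fun n => ((toEnd F L L f) ^ n) m = 0) (by simpa using P.ne_zero) hz
  refine ⟨n, ?_⟩
  have h3 := P.lie_e_pow_succ_toEnd_f n
  rw [hn₂, lie_zero, eq_comm, smul_eq_zero_iff_left hn₁, mul_eq_zero, sub_eq_zero] at h3
  exact h3.resolve_left <| Nat.cast_add_one_ne_zero n

lemma integrality (T : TAlg F L) {β ρ : Module.Dual F T.toTData.H}
    (hβ : β ∈ T.toTData.Rx) (hρ : ρ ∈ T.toTData.R) :
    ∃ m : ℤ, 2 * T.toTData.pr ρ β = (m : F) * T.toTData.pr β β := by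
  classical
  have hβR : β ∈ T.toTData.R := hβ.1
  have ha : T.toTData.pr β β ≠ 0 := hβ.2
  set a := T.toTData.pr β β with hadef
  obtain ⟨e, he, hene⟩ := (Submodule.ne_bot_iff _).mp hβR
  obtain ⟨f, hf, hef⟩ := T.t3b β hβ e he hene
  have htβ : (T.toTData.t β : L) ≠ 0 := by
    intro hc
    apply ha
    have h0 : T.toTData.t β = 0 := by exact_mod_cast hc
    rw [hadef, T.toTData.pr_eq, h0, map_zero]
  have hfne : f ≠ 0 := by
    rintro rfl
    rw [lie_zero] at hef
    exact htβ hef.symm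
  have hmβ : (-β) ∈ T.toTData.Rx := by
    refine ⟨?_, ?_⟩
    · show wt F L T.toTData.H (-β) ≠ ⊥
      exact (Submodule.ne_bot_iff _).mpr ⟨f, hf, hfne⟩
    · show T.toTData.pr (-β) (-β) ≠ 0
      rw [T.toTData.pr_neg_left, T.toTData.pr_neg_right, neg_neg]
      exact ha
  have hβtβ : β (T.toTData.t β) = a := (T.toTData.pr_eq β β).symm
  have hc2 : (2 : F) / a ≠ 0 := div_ne_zero two_ne_zero ha
  set h' : L := ((2 : F) / a) • (T.toTData.t β : L) with hh'
  set f' : L := ((2 : F) / a) • f with hf'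
  have trip : IsSl2Triple h' e f' := by
    constructor
    · exact smul_ne_zero hc2 htβ
    · rw [hf', lie_smul, hef, hh']
    · rw [hh', smul_lie, mem_wt.mp he (T.toTData.t β), hβtβ, smul_smul,
        div_mul_cancel₀ _ ha, two_smul, two_smul]
    · have hlf : ⁅(T.toTData.t β : L), f⁆ = (-a) • f := by
        rw [mem_wt.mp hf (T.toTData.t β), LinearMap.neg_apply, hβtβ]
      rw [hh', hf', smul_lie, lie_smul, hlf, smul_smul, smul_smul,
        show (2:F)/a * ((2:F)/a) * -a = -(2 * ((2:F)/a)) by field_simp,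
        neg_smul, mul_smul, two_smul F ((2/a : F) • f), two_smul ℕ ((2/a : F) • f)]
  obtain ⟨z, hz, hzne⟩ := (Submodule.ne_bot_iff _).mp hρ
  have hPex : ∃ n, ((LieAlgebra.ad F L e) ^ n) z = 0 := T.t4 β hβ e he z
  set N := Nat.find hPex with hN
  have hNspec : ((LieAlgebra.ad F L e) ^ N) z = 0 := Nat.find_spec hPex
  have hNpos : 0 < N := by
    rcases Nat.eq_zero_or_pos N with h0 | h0
    · exfalso
      rw [h0, pow_zero] at hNspec
      exact hzne hNspec
    · exact h0
  set k := N - 1 with hk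
  set m : L := ((LieAlgebra.ad F L e) ^ k) z with hmdef
  have hmne : m ≠ 0 := Nat.find_min hPex (show k < N by omega)
  have hem : ⁅e, m⁆ = 0 := by
    have h1 : ((LieAlgebra.ad F L e) ^ N) z = ⁅e, m⁆ := by
      rw [show N = k + 1 by omega, pow_succ', Module.End.mul_apply]
      rfl
    rw [← h1]
    exact hNspec
  have hmwt : m ∈ wt F L T.toTData.H (ρ + (k : F) • β) := T.toTData.wt_ad_pow he hz k
  set μ : F := 2 * T.toTData.pr ρ β / a + 2 * k with hμ
  have hhm : ⁅h', m⁆ = μ • m := by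
    rw [hh', smul_lie, mem_wt.mp hmwt (T.toTData.t β)]
    have h1 : (ρ + (k : F) • β) (T.toTData.t β) = T.toTData.pr ρ β + (k : F) * a := by
      rw [LinearMap.add_apply, LinearMap.smul_apply, smul_eq_mul, hβtβ, ← T.toTData.pr_eq]
    rw [h1, smul_smul, hμ]
    congr 1
    field_simp
  have P : trip.HasPrimitiveVectorWith m μ := ⟨hmne, hhm, hem⟩
  obtain ⟨n2, hn2⟩ := T.t4 (-β) hmβ f hf m
  have hfz : ∃ n : ℕ, ((toEnd F L L f') ^ n) m = 0 := by
    refine ⟨n2, ?_⟩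
    have hEq : toEnd F L L f' = ((2 : F) / a) • (LieAlgebra.ad F L f) := by
      ext v
      simp [hf']
    rw [hEq, smul_pow, LinearMap.smul_apply, hn2, smul_zero]
  obtain ⟨n, hn⟩ := exists_nat_of_pow_eq_zero P hfz
  rw [hμ] at hn
  refine ⟨(n : ℤ) - 2 * (k : ℤ), ?_⟩
  field_simp at hn
  push_cast
  linear_combination hn

end Gen
namespace Gen

variable {F L : Type*} [Field F] [CharZero F] [LieRing L] [LieAlgebra F L]

/-- The heart of the matter: there is no non-isotropic root `γ` and isotropic root `δ`
with `2(δ,γ) = m(γ,γ)` for a positive integer `m`. -/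
lemma keyPos (T : TAlg F L) {γ δ : Module.Dual F T.toTData.H} {m : ℤ}
    (hγ : γ ∈ T.toTData.Rx) (hδ : δ ∈ T.toTData.R0)
    (hm : 2 * T.toTData.pr δ γ = (m : F) * T.toTData.pr γ γ) (hmpos : 0 < m) : False := by
  have ha : T.toTData.pr γ γ ≠ 0 := hγ.2
  set a := T.toTData.pr γ γ with hadef
  set c := T.toTData.pr δ γ with hcdef
  have hδδ : T.toTData.pr δ δ = 0 := hδ.2
  have hc : c ≠ 0 := by
    intro h0
    rw [h0, mul_zero] at hm
    exact mul_ne_zero (by exact_mod_cast (by omega : m ≠ 0)) ha hm.symm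
  obtain ⟨x, hx, y, hy, hxy⟩ := T.t3a δ hδ
  obtain ⟨e, he, hene⟩ := (Submodule.ne_bot_iff _).mp hγ.1
  -- Claim 1 : `γ + δ` is not a root.
  have hcl1 : wt F L T.toTData.H (γ + δ) = ⊥ := by
    by_contra hne
    have hRoot : (γ + δ) ∈ T.toTData.R := hne
    have hnorm : T.toTData.pr (γ + δ) (γ + δ) = (1 + (m : F)) * a := by
      rw [T.toTData.pr_add_left, T.toTData.pr_add_right, T.toTData.pr_add_right,
        T.toTData.pr_symm γ δ, ← hcdef, ← hadef, hδδ]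
      linear_combination hm
    have h1m : (1 : F) + (m : F) ≠ 0 := by
      have h2 : ((1 + m : ℤ) : F) ≠ 0 := Int.cast_ne_zero.mpr (by omega)
      push_cast at h2
      exact h2
    have hRx : (γ + δ) ∈ T.toTData.Rx := ⟨hRoot, by rw [hnorm]; exact mul_ne_zero h1m ha⟩
    obtain ⟨j, hj⟩ := integrality T hRx hδ.1
    have hL : T.toTData.pr δ (γ + δ) = c := by
      rw [T.toTData.pr_add_right, ← hcdef, hδδ, add_zero]
    rw [hL, hnorm] at hj
    have hzF : ((m : ℤ) : F) = ((j * (1 + m) : ℤ) : F) := by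
      push_cast
      apply mul_right_cancel₀ ha
      linear_combination hj - hm
    have hz : m = j * (1 + m) := by exact_mod_cast hzF
    rcases le_or_gt j 0 with hj0 | hj0
    · have hle : j * (1 + m) ≤ 0 :=
        mul_nonpos_iff.mpr (Or.inr ⟨hj0, by omega⟩)
      linarith
    · have hle : 1 * (1 + m) ≤ j * (1 + m) :=
        mul_le_mul_of_nonneg_right (by omega) (by omega)
      rw [one_mul] at hle
      linarith
  -- Claim 2 : `γ - 3δ` is not a root.
  have hcl2 : wt F L T.toTData.H (γ + (-3 : F) • δ) = ⊥ := by
    by_contra hne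
    have hRoot : (γ + (-3 : F) • δ) ∈ T.toTData.R := hne
    have hnorm : T.toTData.pr (γ + (-3 : F) • δ) (γ + (-3 : F) • δ) = (1 - 3 * (m : F)) * a := by
      rw [T.toTData.pr_add_left, T.toTData.pr_add_right, T.toTData.pr_add_right,
        T.toTData.pr_smul_left, T.toTData.pr_smul_left, T.toTData.pr_smul_right,
        T.toTData.pr_smul_right, T.toTData.pr_symm γ δ, ← hcdef, ← hadef, hδδ]
      linear_combination (-3 : F)/2 * 3 * hm + (3:F)/2*hm
    have h1m : (1 : F) - 3 * (m : F) ≠ 0 := by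
      have h2 : ((1 - 3 * m : ℤ) : F) ≠ 0 := Int.cast_ne_zero.mpr (by omega)
      push_cast at h2
      exact h2
    have hRx : (γ + (-3 : F) • δ) ∈ T.toTData.Rx := ⟨hRoot, by rw [hnorm]; exact mul_ne_zero h1m ha⟩
    obtain ⟨j, hj⟩ := integrality T hRx hδ.1
    have hL : T.toTData.pr δ (γ + (-3 : F) • δ) = c := by
      rw [T.toTData.pr_add_right, T.toTData.pr_smul_right, ← hcdef, hδδ, mul_zero, add_zero]
    rw [hL, hnorm] at hj
    have hzF : ((m : ℤ) : F) = ((j * (1 - 3 * m) : ℤ) : F) := by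
      push_cast
      apply mul_right_cancel₀ ha
      linear_combination hj - hm
    have hz : m = j * (1 - 3 * m) := by exact_mod_cast hzF
    have h3m : 1 - 3 * m ≤ -2 := by omega
    rcases lt_trichotomy j 0 with hj0 | hj0 | hj0
    · have hle : (-1) * (1 - 3 * m) ≤ j * (1 - 3 * m) :=
        mul_le_mul_of_nonpos_right (by omega) (by omega)
      linarith
    · rw [hj0, zero_mul] at hz
      omega
    · have hle : j * (1 - 3 * m) ≤ 1 * (1 - 3 * m) :=
        mul_le_mul_of_nonpos_right (by omega) (by omega)
      rw [one_mul] at hle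
      linarith
  -- The Heisenberg–Weyl computation.
  have hγtδ : γ (T.toTData.t δ) = c := by
    rw [← T.toTData.pr_eq, T.toTData.pr_symm]
  have hδtδ : δ (T.toTData.t δ) = 0 := by
    rw [← T.toTData.pr_eq]
    exact hδδ
  have hlie : ∀ (ν : Module.Dual F T.toTData.H) (v : L), v ∈ wt F L T.toTData.H ν →
      ⁅x, ⁅y, v⁆⁆ - ⁅y, ⁅x, v⁆⁆ = ν (T.toTData.t δ) • v := by
    intro ν v hv
    rw [← lie_lie, hxy, mem_wt.mp hv (T.toTData.t δ)]
  have hxe : ⁅x, e⁆ = 0 := by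
    have h1 := T.toTData.wt_lie hx he
    rw [add_comm δ γ, hcl1] at h1
    simpa using h1
  have hy1 : ⁅y, e⁆ ∈ wt F L T.toTData.H (-δ + γ) := T.toTData.wt_lie hy he
  have hy2 : ⁅y, ⁅y, e⁆⁆ ∈ wt F L T.toTData.H (-δ + (-δ + γ)) := T.toTData.wt_lie hy hy1
  have hy3 : ⁅y, ⁅y, ⁅y, e⁆⁆⁆ = 0 := by
    have h1 := T.toTData.wt_lie hy hy2
    rw [show (-δ + (-δ + (-δ + γ))) = γ + (-3 : F) • δ from by module, hcl2] at h1
    simpa using h1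
  have e1 : ⁅x, ⁅y, e⁆⁆ = c • e := by
    have h1 := hlie γ e he
    rw [hxe, lie_zero, sub_zero, hγtδ] at h1
    exact h1
  have h2 : ((-δ + γ) : Module.Dual F T.toTData.H) (T.toTData.t δ) = c := by
    rw [LinearMap.add_apply, LinearMap.neg_apply, hδtδ, hγtδ, neg_zero, zero_add]
  have e2 : ⁅x, ⁅y, ⁅y, e⁆⁆⁆ = c • ⁅y, e⁆ + c • ⁅y, e⁆ := by
    have h1 := hlie (-δ + γ) ⁅y, e⁆ hy1
    rw [e1, lie_smul, h2] at h1
    have := eq_add_of_sub_eq h1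
    rw [this, add_comm]
  have h3 : ((-δ + (-δ + γ)) : Module.Dual F T.toTData.H) (T.toTData.t δ) = c := by
    rw [LinearMap.add_apply, LinearMap.neg_apply, LinearMap.add_apply, LinearMap.neg_apply,
      hδtδ, hγtδ, neg_zero, zero_add, zero_add]
  have ey2 : ⁅y, ⁅y, e⁆⁆ = 0 := by
    have h1 := hlie (-δ + (-δ + γ)) ⁅y, ⁅y, e⁆⁆ hy2
    rw [hy3, lie_zero, e2, lie_add, lie_smul, h3, zero_sub,
      neg_eq_iff_add_eq_zero] at h1
    have h4 : ((c + c) + c) • ⁅y, ⁅y, e⁆⁆ = 0 := by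
      rw [add_smul, add_smul]
      exact h1
    rcases smul_eq_zero.mp h4 with h5 | h5
    · exact absurd h5 (by
        intro h6
        apply hc
        have h7 : (3 : F) * c = 0 := by linear_combination h6
        have h8 : (3 : F) ≠ 0 := by norm_num
        exact (mul_eq_zero.mp h7).resolve_left h8)
    · exact h5
  have ey1 : ⁅y, e⁆ = 0 := by
    have h1 := e2
    rw [ey2, lie_zero] at h1
    have h4 : ((c : F) + c) • ⁅y, e⁆ = 0 := by
      rw [add_smul]
      exact h1.symm
    rcases smul_eq_zero.mp h4 with h5 | h5
    · exact absurd h5 (by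
        intro h6
        apply hc
        have h7 : (2 : F) * c = 0 := by linear_combination h6
        have h8 : (2 : F) ≠ 0 := by norm_num
        exact (mul_eq_zero.mp h7).resolve_left h8)
    · exact h5
  have h1 := e1
  rw [ey1, lie_zero] at h1
  rcases smul_eq_zero.mp h1.symm with h5 | h5
  · exact hc h5
  · exact hene h5

/-- Non-isotropic roots are orthogonal to isotropic roots. -/
lemma rx_perp (T : TAlg F L) {γ δ : Module.Dual F T.toTData.H}
    (hγ : γ ∈ T.toTData.Rx) (hδ : δ ∈ T.toTData.R0) : T.toTData.pr γ δ = 0 := by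
  by_contra hcγδ
  have hc : T.toTData.pr δ γ ≠ 0 := by
    rw [T.toTData.pr_symm]
    exact hcγδ
  obtain ⟨m, hm⟩ := integrality T hγ hδ.1
  have ha : T.toTData.pr γ γ ≠ 0 := hγ.2
  have hmne : m ≠ 0 := by
    rintro rfl
    rw [Int.cast_zero, zero_mul] at hm
    apply hc
    have := mul_eq_zero.mp hm
    rcases this with h | h
    · norm_num at h
    · exact h
  -- `-δ` is also an isotropic root
  obtain ⟨x, hx, y, hy, hxy⟩ := T.t3a δ hδ
  have htδ : (T.toTData.t δ : L) ≠ 0 := by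
    intro hc0
    apply hcγδ
    have h0 : T.toTData.t δ = 0 := by exact_mod_cast hc0
    rw [T.toTData.pr_eq, h0, map_zero]
  have hyne : y ≠ 0 := by
    rintro rfl
    rw [lie_zero] at hxy
    exact htδ hxy.symm
  have hmδ : (-δ) ∈ T.toTData.R0 := by
    refine ⟨?_, ?_⟩
    · show wt F L T.toTData.H (-δ) ≠ ⊥
      exact (Submodule.ne_bot_iff _).mpr ⟨y, hy, hyne⟩
    · show T.toTData.pr (-δ) (-δ) = 0
      rw [T.toTData.pr_neg_left, T.toTData.pr_neg_right, neg_neg]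
      exact hδ.2
  rcases lt_trichotomy m 0 with hms | hms | hms
  · exact keyPos T (m := -m) hγ hmδ
      (by rw [T.toTData.pr_neg_left]; push_cast; linear_combination -hm) (by omega)
  · exact hmne hms
  · exact keyPos T hγ hδ hm hms

end Gen
/-- For `L ∈ 𝒯`, `(R, R⁰) = {0}`: every root is orthogonal to every
isotropic root. -/
theorem root_orthogonal_isotropic
    (F L : Type*) [Field F] [CharZero F] [LieRing L] [LieAlgebra F L]
    (T : Gen.TAlg F L) :
    ∀ α ∈ T.toTData.R, ∀ δ ∈ T.toTData.R0, T.toTData.pr α δ = 0 := by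
  intro α hα δ hδ
  rcases eq_or_ne (T.toTData.pr α α) 0 with hαα | hαα
  · -- `α` is isotropic
    by_contra hcne
    set c := T.toTData.pr α δ with hcdef
    have hδδ : T.toTData.pr δ δ = 0 := hδ.2
    obtain ⟨x, hx, y, hy, hxy⟩ := T.t3a δ hδ
    obtain ⟨u, hu, hune⟩ := (Submodule.ne_bot_iff _).mp hα
    have hαtδ : α (T.toTData.t δ) = c := (T.toTData.pr_eq α δ).symm
    have hlie : ⁅x, ⁅y, u⁆⁆ - ⁅y, ⁅x, u⁆⁆ = c • u := by
      rw [← lie_lie, hxy, Gen.mem_wt.mp hu (T.toTData.t δ), hαtδ]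
    have hne : ⁅x, u⁆ ≠ 0 ∨ ⁅y, u⁆ ≠ 0 := by
      by_contra hcon
      push_neg at hcon
      rw [hcon.1, hcon.2, lie_zero, lie_zero, sub_zero] at hlie
      exact hune ((smul_eq_zero.mp hlie.symm).resolve_left hcne)
    rcases hne with hne | hne
    · -- `δ + α` is a non-isotropic root
      have hmem : ⁅x, u⁆ ∈ Gen.wt F L T.toTData.H (δ + α) := T.toTData.wt_lie hx hu
      have hRoot : (δ + α) ∈ T.toTData.R :=
        (Submodule.ne_bot_iff _).mpr ⟨⁅x, u⁆, hmem, hne⟩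
      have hnorm : T.toTData.pr (δ + α) (δ + α) = c + c := by
        rw [T.toTData.pr_add_left, T.toTData.pr_add_right, T.toTData.pr_add_right,
          T.toTData.pr_symm δ α, hδδ, hαα, ← hcdef]
        ring
      have hRx : (δ + α) ∈ T.toTData.Rx := ⟨hRoot, by
        rw [hnorm]
        intro h0
        apply hcne
        have h7 : (2 : F) * c = 0 := by linear_combination h0
        exact (mul_eq_zero.mp h7).resolve_left (by norm_num)⟩
      have := Gen.rx_perp T hRx hδ
      rw [T.toTData.pr_add_left, hδδ, zero_add, ← hcdef] at this
      exact hcne this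
    · -- `-δ + α` is a non-isotropic root
      have hmem : ⁅y, u⁆ ∈ Gen.wt F L T.toTData.H (-δ + α) := T.toTData.wt_lie hy hu
      have hRoot : (-δ + α) ∈ T.toTData.R :=
        (Submodule.ne_bot_iff _).mpr ⟨⁅y, u⁆, hmem, hne⟩
      have hnorm : T.toTData.pr (-δ + α) (-δ + α) = -(c + c) := by
        rw [T.toTData.pr_add_left, T.toTData.pr_add_right, T.toTData.pr_add_right,
          T.toTData.pr_neg_left, T.toTData.pr_neg_left, T.toTData.pr_neg_right,
          T.toTData.pr_neg_right, T.toTData.pr_symm δ α, hδδ, hαα, ← hcdef]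
        ring
      have hRx : (-δ + α) ∈ T.toTData.Rx := ⟨hRoot, by
        rw [hnorm]
        intro h0
        apply hcne
        have h7 : (2 : F) * c = 0 := by linear_combination -h0
        exact (mul_eq_zero.mp h7).resolve_left (by norm_num)⟩
      have := Gen.rx_perp T hRx hδ
      rw [T.toTData.pr_add_left, T.toTData.pr_neg_left, hδδ, neg_zero, zero_add, ← hcdef] at this
      exact hcne this
  · -- `α` is non-isotropic
    exact Gen.rx_perp T ⟨hα, hαα⟩ hδ
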